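/- Suppose B₁ ⊆ 𝔽_q^{m₁} is C₁-weakly Sidorenko and B₂ ⊆ 𝔽_q^{m₂} is C₂-weakly Sidorenko. Then B₁ × B₂ ⊆ 𝔽_q^{m₁+m₂} is C₁C₂-weakly Sidorenko. -/

import Mathlib

open Pointwise

noncomputable def omegaLin (F : Type*) [Field F] {V : Type*} [AddCommGroup V] [Module F V]
    (A : Set V) : ℕ :=
  sSup {d : ℕ | ∃ W : Submodule F V, Module.finrank F W = d ∧ (W : Set V) ⊆ A ∪ {0}}

noncomputable def omegaAff (F : Type*) [Field F] {V : Type*} [AddCommGroup V] [Module F V]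
    (A : Set V) : ℕ :=
  sSup {d : ℕ | ∃ (x : V) (W : Submodule F V), Module.finrank F W = d ∧
    (fun w => x + w) '' (W : Set V) ⊆ A}

def dirSet (F : Type*) [Field F] {V : Type*} [AddCommGroup V] [Module F V] (A : Set V) : Set V :=
  {d | ∃ x, ∀ c : F, x + c • d ∈ A}

noncomputable def affRank (F : Type*) [Field F] {V : Type*} [AddCommGroup V] [Module F V]
    (B : Set V) : ℕ :=
  Module.finrank F (affineSpan F B).direction + 1

def affHomSet (F : Type*) [Field F] {V W : Type*} [AddCommGroup V] [Module F V]
    [AddCommGroup W] [Module F W] (B : Set V) (A : Set W) : Set (B → W) :=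
  {f | (∃ φ : V →ᵃ[F] W, ∀ x : B, f x = φ x.1) ∧ ∀ x, f x ∈ A}

def IsNondegen (F : Type*) [Field F] {V W : Type*} [AddCommGroup V] [Module F V]
    [AddCommGroup W] [Module F W] (B : Set V) (f : B → W) : Prop :=
  affRank F (Set.range f) = affRank F B

def WeaklySidorenko (F : Type*) [Field F] [Fintype F] {V : Type*} [AddCommGroup V] [Module F V]
    (B : Set V) (C : ℝ) : Prop :=
  ∀ (n : ℕ) (A : Set (Fin n → F)) (α : ℝ),
    (A.ncard : ℝ) = α * (Fintype.card F : ℝ) ^ n →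
    α ^ C * ((Fintype.card F : ℝ) ^ n) ^ (affRank F B) ≤ ((affHomSet F B A).ncard : ℝ)

noncomputable def exAff (F : Type*) [Field F] [Fintype F] {V : Type*} [AddCommGroup V]
    [Module F V] (n : ℕ) (B : Set V) : ℕ :=
  sSup {k : ℕ | ∃ A : Set (Fin n → F), A.ncard = k ∧
    ∀ f ∈ affHomSet F B A, ¬ IsNondegen F B f}


open Pointwise Module

section Helpers

variable (F : Type*) [Field F] [Fintype F]

/-- Functions `B → F^n` that extend to an affine map and vanish at `b`. -/
def psiSet {V : Type*} [AddCommGroup V] [Module F V] (n : ℕ) (B : Set V) (b : V) :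
    Set (B → (Fin n → F)) :=
  {ψ | (∃ φ : V →ᵃ[F] (Fin n → F), ∀ x : B, ψ x = φ x.1) ∧ ∀ x : B, (x : V) = b → ψ x = 0}

/-- The set of `z` such that `z + ψ y ∈ A` for all `y`. -/
def shiftSet {V₂ : Type*} [AddCommGroup V₂] [Module F V₂] {n : ℕ} {B₂ : Set V₂}
    (A : Set (Fin n → F)) (ψ : B₂ → (Fin n → F)) : Set (Fin n → F) :=
  {z | ∀ y : B₂, z + ψ y ∈ A}

lemma card_psiSet {V : Type*} [AddCommGroup V] [Module F V] [Finite V]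
    (n : ℕ) (B : Set V) (b : V) (hb : b ∈ B) :
    Nat.card (psiSet F n B b) =
      Fintype.card F ^ (Module.finrank F (vectorSpan F B) * n) := by
  classical
  set S := vectorSpan F B with hS
  have hmem : ∀ y : B, (y : V) - b ∈ S := fun y => by
    simpa [vsub_eq_sub] using vsub_mem_vectorSpan F y.2 hb
  have hWmem : ∀ l : S →ₗ[F] (Fin n → F),
      (fun y : B => l ⟨(y : V) - b, hmem y⟩) ∈ psiSet F n B b := by
    intro l
    obtain ⟨g, hg⟩ := l.exists_extend
    refine ⟨⟨g.toAffineMap - AffineMap.const F V (g b), fun y => ?_⟩, fun y hy => ?_⟩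
    · have h1 : l ⟨(y : V) - b, hmem y⟩ = g ((y : V) - b) := by
        rw [← hg]; rfl
      simp [h1, map_sub]
    · have h2 : (⟨(y : V) - b, hmem y⟩ : S) = 0 := by
        apply Subtype.ext; simp [hy]
      show l ⟨(y : V) - b, hmem y⟩ = 0
      rw [h2, map_zero]
  have hbij : Function.Bijective (fun l : S →ₗ[F] (Fin n → F) =>
      (⟨fun y : B => l ⟨(y : V) - b, hmem y⟩, hWmem l⟩ : psiSet F n B b)) := by
    constructor
    · intro l₁ l₂ h
      have h' : ∀ y : B, l₁ ⟨(y : V) - b, hmem y⟩ = l₂ ⟨(y : V) - b, hmem y⟩ := fun y =>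
        congrFun (congrArg Subtype.val h) y
      obtain ⟨g₁, hg₁⟩ := l₁.exists_extend
      obtain ⟨g₂, hg₂⟩ := l₂.exists_extend
      have heqon : Set.EqOn g₁ g₂ ((· -ᵥ b) '' B) := by
        rintro _ ⟨y, hy, rfl⟩
        have e1 : g₁ (y -ᵥ b) = l₁ ⟨(y : V) - b, hmem ⟨y, hy⟩⟩ := by rw [← hg₁]; rfl
        have e2 : g₂ (y -ᵥ b) = l₂ ⟨(y : V) - b, hmem ⟨y, hy⟩⟩ := by rw [← hg₂]; rfl
        rw [e1, e2, h' ⟨y, hy⟩]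
      have hspan : ∀ v : V, v ∈ S → g₁ v = g₂ v := by
        intro v hv
        have hS' : S = Submodule.span F ((· -ᵥ b) '' B) :=
          vectorSpan_eq_span_vsub_set_right F hb
        exact LinearMap.eqOn_span heqon (by rw [← hS']; exact hv)
      apply LinearMap.ext; intro v
      have e1 : l₁ v = g₁ v := by rw [← hg₁]; rfl
      have e2 : l₂ v = g₂ v := by rw [← hg₂]; rfl
      rw [e1, e2, hspan v.1 v.2]
    · rintro ⟨ψ, ⟨φ, hφ⟩, hvan⟩
      refine ⟨φ.linear.domRestrict S, ?_⟩
      apply Subtype.ext; funext y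
      have h1 : φ.linear ((y : V) - b) = φ y - φ b := by
        simpa [vsub_eq_sub] using φ.linearMap_vsub (y : V) b
      have h2 := hφ y
      have h3 := hφ (⟨b, hb⟩ : B)
      have h4 := hvan (⟨b, hb⟩ : B) rfl
      simp only [LinearMap.domRestrict_apply, h1, ← h2, ← h3, h4]
      rw [h4] at h3
      simp [← h3]
  rw [← Nat.card_congr (Equiv.ofBijective _ hbij)]
  have hfin : Finite (S →ₗ[F] (Fin n → F)) :=
    Finite.of_injective (fun l => (l : S → (Fin n → F))) DFunLike.coe_injective
  letI : Fintype (S →ₗ[F] (Fin n → F)) := Fintype.ofFinite _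
  rw [Nat.card_eq_fintype_card, card_eq_pow_finrank (K := F), Module.finrank_linearMap,
    Module.finrank_fin_fun]

end Helpers

section Decomp

lemma ncard_decomp {X Y Z : Type*} [Finite X] [Finite Y] [Finite Z]
    (U : Set X) (S : Set Y) (T : Y → Set Z)
    (e : U ≃ {p : Y × Z // p.1 ∈ S ∧ p.2 ∈ T p.1}) :
    U.ncard = ∑ y ∈ S.toFinite.toFinset, (T y).ncard := by
  classical
  letI : Fintype Y := Fintype.ofFinite Y
  letI : ∀ y : Y, Fintype {z : Z // y ∈ S ∧ z ∈ T y} := fun y => Fintype.ofFinite _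
  have h1 : Nat.card U = ∑ y : Y, Nat.card {z : Z // y ∈ S ∧ z ∈ T y} := by
    rw [Nat.card_congr (e.trans (Equiv.subtypeProdEquivSigmaSubtype
      (fun (a : Y) (b : Z) => a ∈ S ∧ b ∈ T a)))]
    rw [Nat.card_eq_fintype_card, Fintype.card_sigma]
    simp [Nat.card_eq_fintype_card]
  rw [← Nat.card_coe_set_eq, h1]
  have h2 : ∑ y : Y, Nat.card {z : Z // y ∈ S ∧ z ∈ T y}
      = ∑ y ∈ S.toFinite.toFinset, Nat.card {z : Z // y ∈ S ∧ z ∈ T y} :=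
    (Finset.sum_subset (Finset.subset_univ _) (fun y _ hy => by
      have hyS : y ∉ S := fun h => hy (by simpa using h)
      have : IsEmpty {z : Z // y ∈ S ∧ z ∈ T y} := ⟨fun z => hyS z.2.1⟩
      exact Nat.card_of_isEmpty)).symm
  rw [h2]
  refine Finset.sum_congr rfl fun y hy => ?_
  have hyS : y ∈ S := by simpa using hy
  rw [← Nat.card_coe_set_eq]
  exact Nat.card_congr (Equiv.subtypeEquivRight fun z => by simp [hyS])

variable (F : Type*) [Field F] [Fintype F]

lemma affine_prod_identity {V₁ V₂ W : Type*} [AddCommGroup V₁] [Module F V₁]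
    [AddCommGroup V₂] [Module F V₂] [AddCommGroup W] [Module F W]
    (φ : V₁ × V₂ →ᵃ[F] W) (x b₁ : V₁) (y b₂ : V₂) :
    φ (x, y) = φ (x, b₂) + φ (b₁, y) - φ (b₁, b₂) := by
  have h1 : φ (x, y) - φ (x, b₂) = φ.linear (0, y - b₂) := by
    rw [← vsub_eq_sub, ← φ.linearMap_vsub]
    congr 1
    simp [vsub_eq_sub, Prod.ext_iff]
  have h2 : φ (b₁, y) - φ (b₁, b₂) = φ.linear (0, y - b₂) := by
    rw [← vsub_eq_sub, ← φ.linearMap_vsub]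
    congr 1
    simp [vsub_eq_sub, Prod.ext_iff]
  calc φ (x, y) = φ (x, b₂) + (φ (x, y) - φ (x, b₂)) := by abel
  _ = φ (x, b₂) + (φ (b₁, y) - φ (b₁, b₂)) := by rw [h1, ← h2]
  _ = _ := by abel

end Decomp

section DecompSpecific

set_option linter.unusedSectionVars false

variable (F : Type*) [Field F] [Fintype F]
variable {V₁ V₂ : Type*} [AddCommGroup V₁] [Module F V₁] [AddCommGroup V₂] [Module F V₂]
variable {n : ℕ} (A : Set (Fin n → F)) (B₁ : Set V₁) (B₂ : Set V₂)

lemma card_decomp₂ [Finite V₂] {b₂ : V₂} (hb₂ : b₂ ∈ B₂) :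
    (affHomSet F B₂ A).ncard =
      ∑ ψ ∈ (psiSet F n B₂ b₂).toFinite.toFinset, (shiftSet F A ψ).ncard := by
  apply ncard_decomp
  have mem₁ : ∀ g : affHomSet F B₂ A,
      (fun y : B₂ => g.1 y - g.1 ⟨b₂, hb₂⟩) ∈ psiSet F n B₂ b₂ := by
    rintro ⟨g, ⟨φ, hφ⟩, hA⟩
    refine ⟨⟨φ - AffineMap.const F V₂ (φ b₂), fun y => ?_⟩, fun y hy => ?_⟩
    · simp [hφ y, hφ (⟨b₂, hb₂⟩ : B₂)]
    · have : y = (⟨b₂, hb₂⟩ : B₂) := Subtype.ext hy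
      simp [this]
  have mem₂ : ∀ g : affHomSet F B₂ A,
      g.1 ⟨b₂, hb₂⟩ ∈ shiftSet F A (fun y : B₂ => g.1 y - g.1 ⟨b₂, hb₂⟩) := by
    rintro ⟨g, ⟨φ, hφ⟩, hA⟩
    intro y
    simpa using hA y
  refine Equiv.ofBijective (fun g =>
    ⟨((fun y : B₂ => g.1 y - g.1 ⟨b₂, hb₂⟩), g.1 ⟨b₂, hb₂⟩), mem₁ g, mem₂ g⟩) ⟨?_, ?_⟩
  · intro g₁ g₂ h
    have e1 : (fun y : B₂ => g₁.1 y - g₁.1 ⟨b₂, hb₂⟩) = fun y : B₂ => g₂.1 y - g₂.1 ⟨b₂, hb₂⟩ :=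
      congrArg (fun p => p.1.1) h
    have e2 : g₁.1 ⟨b₂, hb₂⟩ = g₂.1 ⟨b₂, hb₂⟩ := congrArg (fun p => p.1.2) h
    apply Subtype.ext; funext y
    have := congrFun e1 y
    have : g₁.1 y - g₁.1 ⟨b₂, hb₂⟩ = g₂.1 y - g₂.1 ⟨b₂, hb₂⟩ := this
    calc g₁.1 y = (g₁.1 y - g₁.1 ⟨b₂, hb₂⟩) + g₁.1 ⟨b₂, hb₂⟩ := by abel
    _ = (g₂.1 y - g₂.1 ⟨b₂, hb₂⟩) + g₂.1 ⟨b₂, hb₂⟩ := by rw [this, e2]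
    _ = g₂.1 y := by abel
  · rintro ⟨⟨ψ, z⟩, hψ, hz⟩
    have hmem : (fun y : B₂ => z + ψ y) ∈ affHomSet F B₂ A := by
      obtain ⟨⟨φ, hφ⟩, -⟩ := hψ
      refine ⟨⟨AffineMap.const F V₂ z + φ, fun y => ?_⟩, fun y => hz y⟩
      simp
      exact hφ y
    refine ⟨⟨_, hmem⟩, ?_⟩
    apply Subtype.ext
    have hψ0 : ψ ⟨b₂, hb₂⟩ = 0 := hψ.2 ⟨b₂, hb₂⟩ rfl
    refine Prod.ext ?_ ?_
    · funext y
      show (z + ψ y) - (z + ψ ⟨b₂, hb₂⟩) = ψ y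
      rw [hψ0]; abel
    · show z + ψ ⟨b₂, hb₂⟩ = z
      rw [hψ0]; abel


@[simp] noncomputable def pairRight (b₁ : V₁) : V₂ →ᵃ[F] V₁ × V₂ where
  toFun y := (b₁, y)
  linear := LinearMap.inr F V₁ V₂
  map_vadd' p v := by simp [Prod.ext_iff]

@[simp] noncomputable def pairLeft (b₂ : V₂) : V₁ →ᵃ[F] V₁ × V₂ where
  toFun x := (x, b₂)
  linear := LinearMap.inl F V₁ V₂
  map_vadd' p v := by simp [Prod.ext_iff]

lemma card_decomp₁ [Finite V₁] [Finite V₂] {b₁ : V₁} {b₂ : V₂} (hb₁ : b₁ ∈ B₁) (hb₂ : b₂ ∈ B₂) :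
    (affHomSet F (B₁ ×ˢ B₂) A).ncard =
      ∑ ψ ∈ (psiSet F n B₂ b₂).toFinite.toFinset,
        (affHomSet F B₁ (shiftSet F A ψ)).ncard := by
  classical
  have memΨ : ∀ h : ↥(affHomSet F (B₁ ×ˢ B₂) A),
      (fun y : B₂ => h.1 ⟨(b₁, y.1), ⟨hb₁, y.2⟩⟩ - h.1 ⟨(b₁, b₂), ⟨hb₁, hb₂⟩⟩)
        ∈ psiSet F n B₂ b₂ := by
    intro h
    obtain ⟨φ, hφ⟩ := h.2.1
    constructor
    · refine ⟨φ.comp (pairRight F b₁) - AffineMap.const F V₂ (φ (b₁, b₂)), fun y => ?_⟩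
      show h.1 ⟨(b₁, (y : V₂)), ⟨hb₁, y.2⟩⟩ - h.1 ⟨(b₁, b₂), ⟨hb₁, hb₂⟩⟩ = _
      rw [hφ ⟨(b₁, y.1), ⟨hb₁, y.2⟩⟩, hφ ⟨(b₁, b₂), ⟨hb₁, hb₂⟩⟩]
      simp
    · intro y hy
      have he : (⟨(b₁, (y : V₂)), ⟨hb₁, y.2⟩⟩ : ↥(B₁ ×ˢ B₂)) = ⟨(b₁, b₂), ⟨hb₁, hb₂⟩⟩ := by
        apply Subtype.ext; simp [Prod.ext_iff, hy]
      show h.1 ⟨(b₁, (y : V₂)), ⟨hb₁, y.2⟩⟩ - h.1 ⟨(b₁, b₂), ⟨hb₁, hb₂⟩⟩ = 0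
      rw [he, sub_self]
  have memF : ∀ h : ↥(affHomSet F (B₁ ×ˢ B₂) A),
      (fun x : B₁ => h.1 ⟨((x : V₁), b₂), ⟨x.2, hb₂⟩⟩) ∈ affHomSet F B₁
        (shiftSet F A
          (fun y : B₂ => h.1 ⟨(b₁, y.1), ⟨hb₁, y.2⟩⟩ - h.1 ⟨(b₁, b₂), ⟨hb₁, hb₂⟩⟩)) := by
    intro h
    obtain ⟨φ, hφ⟩ := h.2.1
    constructor
    · refine ⟨φ.comp (pairLeft F b₂), fun x => ?_⟩
      show h.1 ⟨((x : V₁), b₂), ⟨x.2, hb₂⟩⟩ = _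
      rw [hφ ⟨((x : V₁), b₂), ⟨x.2, hb₂⟩⟩]
      simp
    · intro x y
      show h.1 ⟨((x : V₁), b₂), ⟨x.2, hb₂⟩⟩ +
        (h.1 ⟨(b₁, (y : V₂)), ⟨hb₁, y.2⟩⟩ - h.1 ⟨(b₁, b₂), ⟨hb₁, hb₂⟩⟩) ∈ A
      rw [hφ, hφ, hφ]
      have h1 := affine_prod_identity F φ (x : V₁) b₁ (y : V₂) b₂
      have h2 : φ ((x : V₁), b₂) + (φ (b₁, (y : V₂)) - φ (b₁, b₂)) = φ ((x : V₁), (y : V₂)) := by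
        rw [h1]; abel
      rw [h2]
      have h3 := h.2.2 ⟨((x : V₁), (y : V₂)), ⟨x.2, y.2⟩⟩
      rw [hφ] at h3
      exact h3
  have key : ∀ h : ↥(affHomSet F (B₁ ×ˢ B₂) A), ∀ x : ↥(B₁ ×ˢ B₂),
      h.1 x = h.1 ⟨((x : V₁ × V₂).1, b₂), ⟨x.2.1, hb₂⟩⟩ +
        (h.1 ⟨(b₁, (x : V₁ × V₂).2), ⟨hb₁, x.2.2⟩⟩ - h.1 ⟨(b₁, b₂), ⟨hb₁, hb₂⟩⟩) := by
    intro h x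
    obtain ⟨φ, hφ⟩ := h.2.1
    rw [hφ, hφ, hφ, hφ]
    have h1 := affine_prod_identity F φ (x : V₁ × V₂).1 b₁ (x : V₁ × V₂).2 b₂
    have h2 : (((x : V₁ × V₂).1, (x : V₁ × V₂).2)) = (x : V₁ × V₂) := rfl
    rw [h2] at h1
    rw [h1]; abel
  have hinj : Function.Injective (fun h : ↥(affHomSet F (B₁ ×ˢ B₂) A) =>
      (⟨((fun y : B₂ => h.1 ⟨(b₁, y.1), ⟨hb₁, y.2⟩⟩ - h.1 ⟨(b₁, b₂), ⟨hb₁, hb₂⟩⟩),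
         (fun x : B₁ => h.1 ⟨((x : V₁), b₂), ⟨x.2, hb₂⟩⟩)), memΨ h, memF h⟩ :
        {p : (B₂ → Fin n → F) × (B₁ → Fin n → F) //
          p.1 ∈ psiSet F n B₂ b₂ ∧ p.2 ∈ affHomSet F B₁ (shiftSet F A p.1)})) := by
    intro h₁ h₂ hhe
    have e1 := congrArg (fun p => p.1.1) hhe
    have e2 := congrArg (fun p => p.1.2) hhe
    simp only at e1 e2
    apply Subtype.ext; funext x
    have e1' := congrFun e1 ⟨(x : V₁ × V₂).2, x.2.2⟩
    have e2' := congrFun e2 ⟨(x : V₁ × V₂).1, x.2.1⟩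
    simp only at e1' e2'
    rw [key h₁ x, key h₂ x, e1', e2']
  have hsurj : Function.Surjective (fun h : ↥(affHomSet F (B₁ ×ˢ B₂) A) =>
      (⟨((fun y : B₂ => h.1 ⟨(b₁, y.1), ⟨hb₁, y.2⟩⟩ - h.1 ⟨(b₁, b₂), ⟨hb₁, hb₂⟩⟩),
         (fun x : B₁ => h.1 ⟨((x : V₁), b₂), ⟨x.2, hb₂⟩⟩)), memΨ h, memF h⟩ :
        {p : (B₂ → Fin n → F) × (B₁ → Fin n → F) //
          p.1 ∈ psiSet F n B₂ b₂ ∧ p.2 ∈ affHomSet F B₁ (shiftSet F A p.1)})) := by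
    rintro ⟨⟨ψ, f⟩, hψ, hf⟩
    have hmem : (fun x : ↥(B₁ ×ˢ B₂) => f ⟨(x : V₁ × V₂).1, x.2.1⟩ + ψ ⟨(x : V₁ × V₂).2, x.2.2⟩)
        ∈ affHomSet F (B₁ ×ˢ B₂) A := by
      obtain ⟨φf, hφf⟩ := hf.1
      obtain ⟨φψ, hφψ⟩ := hψ.1
      simp only at hφf hφψ
      constructor
      · refine ⟨φf.comp AffineMap.fst + φψ.comp AffineMap.snd, fun x => ?_⟩
        show f ⟨(x : V₁ × V₂).1, x.2.1⟩ + ψ ⟨(x : V₁ × V₂).2, x.2.2⟩ = _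
        rw [hφf ⟨(x : V₁ × V₂).1, x.2.1⟩, hφψ ⟨(x : V₁ × V₂).2, x.2.2⟩]
        simp
      · intro x
        exact hf.2 ⟨(x : V₁ × V₂).1, x.2.1⟩ ⟨(x : V₁ × V₂).2, x.2.2⟩
    refine ⟨⟨_, hmem⟩, ?_⟩
    have hψ0 : ψ ⟨b₂, hb₂⟩ = 0 := hψ.2 ⟨b₂, hb₂⟩ rfl
    apply Subtype.ext
    refine Prod.ext ?_ ?_
    · funext y
      show (f ⟨b₁, hb₁⟩ + ψ ⟨(y : V₂), y.2⟩) - (f ⟨b₁, hb₁⟩ + ψ ⟨b₂, hb₂⟩) = ψ y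
      rw [hψ0]
      simp
    · funext x
      show f ⟨(x : V₁), x.2⟩ + ψ ⟨b₂, hb₂⟩ = f x
      rw [hψ0]
      simp
  exact ncard_decomp _ _ _ (Equiv.ofBijective _ ⟨hinj, hsurj⟩)

end DecompSpecific

section RankLemmas

variable (F : Type*) [Field F]
variable {V₁ V₂ : Type*} [AddCommGroup V₁] [Module F V₁] [AddCommGroup V₂] [Module F V₂]

lemma vectorSpan_prod_eq' {s : Set V₁} {t : Set V₂} (hs : s.Nonempty) (ht : t.Nonempty) :
    vectorSpan F (s ×ˢ t) = (vectorSpan F s).prod (vectorSpan F t) := by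
  apply le_antisymm
  · rw [vectorSpan_def, Submodule.span_le]
    rintro ⟨u, v⟩ h
    rw [Set.mem_vsub] at h
    obtain ⟨a, ha, c, hc, hac⟩ := h
    rw [← hac]
    refine Submodule.mem_prod.2 ⟨?_, ?_⟩
    · exact vsub_mem_vectorSpan F ha.1 hc.1
    · exact vsub_mem_vectorSpan F ha.2 hc.2
  · rintro ⟨u, v⟩ huv
    obtain ⟨hu, hv⟩ := Submodule.mem_prod.1 huv
    obtain ⟨a, ha⟩ := hs
    obtain ⟨c, hc⟩ := ht
    have h1 : ((u, 0) : V₁ × V₂) ∈ vectorSpan F (s ×ˢ t) := by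
      have hmap : Submodule.map (LinearMap.inl F V₁ V₂) (vectorSpan F s)
          ≤ vectorSpan F (s ×ˢ t) := by
        rw [vectorSpan_def F s, Submodule.map_span, vectorSpan_def, Submodule.span_le]
        rintro _ ⟨w, hw, rfl⟩
        rw [Set.mem_vsub] at hw
        obtain ⟨p, hp, r, hr, hpr⟩ := hw
        apply Submodule.subset_span
        rw [Set.mem_vsub]
        exact ⟨(p, c), ⟨hp, hc⟩, (r, c), ⟨hr, hc⟩, by
          rw [← hpr]; simp [vsub_eq_sub, Prod.ext_iff]⟩
      exact hmap ⟨u, hu, rfl⟩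
    have h2 : ((0, v) : V₁ × V₂) ∈ vectorSpan F (s ×ˢ t) := by
      have hmap : Submodule.map (LinearMap.inr F V₁ V₂) (vectorSpan F t)
          ≤ vectorSpan F (s ×ˢ t) := by
        rw [vectorSpan_def F t, Submodule.map_span, vectorSpan_def, Submodule.span_le]
        rintro _ ⟨w, hw, rfl⟩
        rw [Set.mem_vsub] at hw
        obtain ⟨p, hp, r, hr, hpr⟩ := hw
        apply Submodule.subset_span
        rw [Set.mem_vsub]
        exact ⟨(a, p), ⟨ha, hp⟩, (a, r), ⟨ha, hr⟩, by
          rw [← hpr]; simp [vsub_eq_sub, Prod.ext_iff]⟩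
      exact hmap ⟨v, hv, rfl⟩
    have h3 : ((u, v) : V₁ × V₂) = (u, 0) + (0, v) := by simp
    rw [h3]
    exact (vectorSpan F (s ×ˢ t)).add_mem h1 h2

noncomputable def submoduleProdEquiv (p : Submodule F V₁) (q : Submodule F V₂) :
    ↥(p.prod q) ≃ₗ[F] ↥p × ↥q where
  toFun x := (⟨x.1.1, x.2.1⟩, ⟨x.1.2, x.2.2⟩)
  invFun x := ⟨(x.1.1, x.2.1), ⟨x.1.2, x.2.2⟩⟩
  map_add' _ _ := rfl
  map_smul' _ _ := rfl
  left_inv _ := rfl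
  right_inv _ := rfl

lemma affRank_prod_eq [FiniteDimensional F V₁] [FiniteDimensional F V₂]
    {B₁ : Set V₁} {B₂ : Set V₂} (h₁ : B₁.Nonempty) (h₂ : B₂.Nonempty) :
    affRank F (B₁ ×ˢ B₂) = affRank F B₁ + Module.finrank F (vectorSpan F B₂) := by
  unfold affRank
  rw [direction_affineSpan, direction_affineSpan, vectorSpan_prod_eq' F h₁ h₂,
    (submoduleProdEquiv F _ _).finrank_eq, Module.finrank_prod]
  omega

end RankLemmas

section DegenLemmas

variable (F : Type*) [Field F] [Fintype F]

lemma not_weaklySidorenko_empty {V : Type*} [AddCommGroup V] [Module F V] (C : ℝ) :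
    ¬ WeaklySidorenko F (∅ : Set V) C := by
  intro h
  have hq1 : (1:ℝ) < (Fintype.card F : ℝ) := by exact_mod_cast Fintype.one_lt_card
  have h1 := h 1 Set.univ 1 ?_
  · have hrank : affRank F (∅ : Set V) = 1 := by
      unfold affRank
      rw [AffineSubspace.span_empty, AffineSubspace.direction_bot, finrank_bot]
    have hhom : ((affHomSet F (∅ : Set V) (Set.univ : Set (Fin 1 → F))).ncard : ℝ) ≤ 1 := by
      have hle : (affHomSet F (∅ : Set V) (Set.univ : Set (Fin 1 → F))).ncard
          ≤ (Set.univ : Set (↥(∅ : Set V) → (Fin 1 → F))).ncard :=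
        Set.ncard_le_ncard (Set.subset_univ _) (Set.toFinite _)
      have : IsEmpty ↥(∅ : Set V) := by
        refine ⟨fun x => ?_⟩
        exact absurd x.2 (Set.notMem_empty x.1)
      letI : Unique (↥(∅ : Set V) → (Fin 1 → F)) := Pi.uniqueOfIsEmpty _
      rw [Set.ncard_univ, Nat.card_unique] at hle
      exact_mod_cast hle
    rw [hrank, Real.one_rpow, one_mul, pow_one] at h1
    have := le_trans h1 hhom
    linarith
  · rw [Set.ncard_univ, Nat.card_eq_fintype_card]
    simp

lemma affRank_le_const {V : Type*} [AddCommGroup V] [Module F V] {B : Set V} {C : ℝ}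
    (hB : B.Nonempty) (h : WeaklySidorenko F B C) : (affRank F B : ℝ) ≤ C := by
  obtain ⟨b, hb⟩ := hB
  have hq1 : (1:ℝ) < (Fintype.card F : ℝ) := by exact_mod_cast Fintype.one_lt_card
  have hq0 : (0:ℝ) < (Fintype.card F : ℝ) := lt_trans one_pos hq1
  have h1 := h 1 ({0} : Set (Fin 1 → F)) (1 / (Fintype.card F : ℝ)) ?_
  · have hhom : affHomSet F B ({0} : Set (Fin 1 → F)) = {fun _ => 0} := by
      ext f
      constructor
      · rintro ⟨-, h2⟩
        funext x
        exact h2 x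
      · rintro rfl
        exact ⟨⟨AffineMap.const F V 0, fun x => rfl⟩, fun x => rfl⟩
    rw [hhom, Set.ncard_singleton, pow_one] at h1
    have e1 : (1 / (Fintype.card F : ℝ)) ^ C = (Fintype.card F : ℝ) ^ (-C) := by
      rw [one_div, Real.inv_rpow hq0.le, ← Real.rpow_neg hq0.le]
    have e2 : ((Fintype.card F : ℝ)) ^ (affRank F B)
        = (Fintype.card F : ℝ) ^ ((affRank F B : ℕ) : ℝ) := (Real.rpow_natCast _ _).symm
    rw [e1, e2, ← Real.rpow_add hq0] at h1
    have h1' : (Fintype.card F : ℝ) ^ (-C + (affRank F B : ℝ))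
        ≤ (Fintype.card F : ℝ) ^ (0:ℝ) := by
      rw [Real.rpow_zero]; exact_mod_cast h1
    have := (Real.rpow_le_rpow_left_iff hq1).1 h1'
    linarith
  · rw [Set.ncard_singleton]
    push_cast
    field_simp

end DegenLemmas

theorem stmt_8 (F : Type*) [Field F] [Fintype F] (m₁ m₂ : ℕ)
    (B₁ : Set (Fin m₁ → F)) (B₂ : Set (Fin m₂ → F)) (C₁ C₂ : ℝ)
    (h₁ : WeaklySidorenko F B₁ C₁) (h₂ : WeaklySidorenko F B₂ C₂) :
    WeaklySidorenko F (B₁ ×ˢ B₂) (C₁ * C₂) := by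
  classical
  rcases Set.eq_empty_or_nonempty B₁ with hB₁ | hB₁
  · exact absurd (hB₁ ▸ h₁) (not_weaklySidorenko_empty F C₁)
  rcases Set.eq_empty_or_nonempty B₂ with hB₂ | hB₂
  · exact absurd (hB₂ ▸ h₂) (not_weaklySidorenko_empty F C₂)
  obtain ⟨b₁, hb₁⟩ := hB₁
  obtain ⟨b₂, hb₂⟩ := hB₂
  intro n A α hα
  have hq1 : (1:ℝ) < (Fintype.card F : ℝ) := by exact_mod_cast Fintype.one_lt_card
  have hq0 : (0:ℝ) < (Fintype.card F : ℝ) := lt_trans one_pos hq1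
  set N : ℝ := (Fintype.card F : ℝ) ^ n with hNdef
  have hN0 : (0:ℝ) < N := pow_pos hq0 n
  have hα0 : 0 ≤ α := by
    have h0 : (0:ℝ) ≤ α * N := by rw [← hα]; positivity
    exact (mul_nonneg_iff_of_pos_right hN0).1 h0
  have hC₁ : 1 ≤ C₁ := by
    have hle := affRank_le_const F ⟨b₁, hb₁⟩ h₁
    have h1 : (1:ℝ) ≤ (affRank F B₁ : ℝ) := by
      have : 1 ≤ affRank F B₁ := Nat.le_add_left 1 _
      exact_mod_cast this
    linarith
  set Ψ : Finset (↥B₂ → Fin n → F) := (psiSet F n B₂ b₂).toFinite.toFinset with hΨdef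
  set d₂ : ℕ := Module.finrank F (vectorSpan F B₂) with hd₂
  set K : ℝ := N ^ d₂ with hKdef
  have hK0 : (0:ℝ) < K := pow_pos hN0 _
  have hΨcard : (Ψ.card : ℝ) = K := by
    rw [hΨdef, ← Set.ncard_eq_toFinset_card (psiSet F n B₂ b₂) (Set.toFinite _),
      ← Nat.card_coe_set_eq, card_psiSet F n B₂ b₂ hb₂]
    push_cast
    rw [hKdef, hNdef, ← pow_mul, mul_comm n d₂]
  have hr₂ : affRank F B₂ = d₂ + 1 := by
    rw [affRank, direction_affineSpan]
  have hrprod : affRank F (B₁ ×ˢ B₂) = affRank F B₁ + d₂ :=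
    affRank_prod_eq F ⟨b₁, hb₁⟩ ⟨b₂, hb₂⟩
  have hdec₁ := card_decomp₁ F A B₁ B₂ hb₁ hb₂
  have hdec₂ := card_decomp₂ F A B₂ hb₂
  -- apply h₁ to each shifted set
  have hqn0 : ((Fintype.card F : ℝ)) ^ n ≠ 0 := by positivity
  have happ : ∀ ψ ∈ Ψ, (((shiftSet F A ψ).ncard : ℝ) / N) ^ C₁ * N ^ (affRank F B₁)
      ≤ ((affHomSet F B₁ (shiftSet F A ψ)).ncard : ℝ) := by
    intro ψ _
    have h := h₁ n (shiftSet F A ψ) (((shiftSet F A ψ).ncard : ℝ) / N)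
      (by rw [hNdef]; field_simp)
    rw [← hNdef] at h
    exact h
  have hsum_le : ∑ ψ ∈ Ψ, (((shiftSet F A ψ).ncard : ℝ) / N) ^ C₁ * N ^ (affRank F B₁)
      ≤ ((affHomSet F (B₁ ×ˢ B₂) A).ncard : ℝ) := by
    rw [hdec₁]
    push_cast
    exact Finset.sum_le_sum happ
  have hS₁ : ∑ ψ ∈ Ψ, ((shiftSet F A ψ).ncard : ℝ) = ((affHomSet F B₂ A).ncard : ℝ) := by
    rw [hdec₂]
    push_cast
    rfl
  have hh₂ := h₂ n A α hα
  rw [← hNdef] at hh₂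
  have hsum_avg : ∑ ψ ∈ Ψ, (1 / K) * (((shiftSet F A ψ).ncard : ℝ) / N)
      = ((affHomSet F B₂ A).ncard : ℝ) / (K * N) := by
    rw [← Finset.mul_sum, ← Finset.sum_div, hS₁]
    field_simp
  have havg : α ^ C₂ ≤ ∑ ψ ∈ Ψ, (1 / K) * (((shiftSet F A ψ).ncard : ℝ) / N) := by
    rw [hsum_avg, le_div_iff₀ (by positivity)]
    calc α ^ C₂ * (K * N) = α ^ C₂ * N ^ (affRank F B₂) := by
          rw [hr₂, pow_succ, hKdef]
    _ ≤ _ := hh₂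
  have hconv := Real.rpow_arith_mean_le_arith_mean_rpow Ψ (fun _ => 1 / K)
      (fun ψ => ((shiftSet F A ψ).ncard : ℝ) / N) (fun _ _ => by positivity)
      (by rw [Finset.sum_const, nsmul_eq_mul, hΨcard]; field_simp) (fun _ _ => by positivity) hC₁
  have hmono : (α ^ C₂) ^ C₁ ≤ ∑ ψ ∈ Ψ, (1 / K) * (((shiftSet F A ψ).ncard : ℝ) / N) ^ C₁ :=
    le_trans (Real.rpow_le_rpow (by positivity) havg (le_trans zero_le_one hC₁)) hconv
  have hpow : (α ^ C₂) ^ C₁ = α ^ (C₁ * C₂) := by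
    rw [mul_comm, Real.rpow_mul hα0]
  have hfinal : K * α ^ (C₁ * C₂) ≤ ∑ ψ ∈ Ψ, (((shiftSet F A ψ).ncard : ℝ) / N) ^ C₁ := by
    have h5 : α ^ (C₁ * C₂) ≤ (1 / K) * ∑ ψ ∈ Ψ, (((shiftSet F A ψ).ncard : ℝ) / N) ^ C₁ := by
      rw [← hpow, Finset.mul_sum]
      exact hmono
    calc K * α ^ (C₁ * C₂)
        ≤ K * ((1 / K) * ∑ ψ ∈ Ψ, (((shiftSet F A ψ).ncard : ℝ) / N) ^ C₁) :=
          mul_le_mul_of_nonneg_left h5 hK0.le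
    _ = ∑ ψ ∈ Ψ, (((shiftSet F A ψ).ncard : ℝ) / N) ^ C₁ := by
          field_simp
  calc α ^ (C₁ * C₂) * N ^ (affRank F (B₁ ×ˢ B₂))
      = (K * α ^ (C₁ * C₂)) * N ^ (affRank F B₁) := by
        rw [hrprod, pow_add, hKdef]; ring
  _ ≤ (∑ ψ ∈ Ψ, (((shiftSet F A ψ).ncard : ℝ) / N) ^ C₁) * N ^ (affRank F B₁) :=
        mul_le_mul_of_nonneg_right hfinal (by positivity)
  _ = ∑ ψ ∈ Ψ, (((shiftSet F A ψ).ncard : ℝ) / N) ^ C₁ * N ^ (affRank F B₁) := by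
        rw [Finset.sum_mul]
  _ ≤ _ := hsum_le
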